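/- arXiv:cs/0109033 — 4 statements merged into one kernel-verified Lean document; each statement's English description precedes it below -/
import Mathlib

section
/- Fix N C : ℕ and let A := Fin N × Bool × Fin C with the mutual-exclusion relation MutEx. Every S : Finset A that admits a consistent schedule for MutEx satisfies S.card ≤ N * C. -/
/-- A consistent schedule for a finite set `S` of accepted actions with respect to
the precedence relation `r` is a function `f : α → ℕ` injective on `S` with
`f a < f b` whenever `a ∈ S`, `b ∈ S` and `r a b`. -/
def ConsistentSchedule {α : Type*} (r : α → α → Prop) (S : Finset α) (f : α → ℕ) : Prop :=
  Set.InjOn f ↑S ∧ ∀ a ∈ S, ∀ b ∈ S, r a b → f a < f b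

/-- The mutual-exclusion relation on actions `A := Fin N × Bool × Fin C`:
`(v, false, i)` and `(v, true, j)` are related (in both orders) for all `v`, `i`, `j`,
and no other pairs are related. -/
def MutEx (N C : ℕ) (x y : Fin N × Bool × Fin C) : Prop :=
  x.1 = y.1 ∧ x.2.1 = !y.2.1

/-- `σ(η)`: the set of actions `(v, η v, i)` for `v : Fin N` and `i : Fin C`. -/
def sigmaSet (N C : ℕ) (η : Fin N → Bool) : Finset (Fin N × Bool × Fin C) :=
  Finset.univ.filter fun a => a.2.1 = η a.1

/-- Any set of actions admitting a consistent schedule for `MutEx` has at most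
`N * C` elements. -/
theorem card_le_of_mutEx_schedule (N C : ℕ) (S : Finset (Fin N × Bool × Fin C))
    (h : ∃ f : Fin N × Bool × Fin C → ℕ, ConsistentSchedule (MutEx N C) S f) :
    S.card ≤ N * C := by
  obtain ⟨f, hinj, hlt⟩ := h
  have key : ∀ a ∈ S, ∀ b ∈ S, a.1 = b.1 → a.2.2 = b.2.2 → a = b := by
    intro a ha b hb h1 h2
    by_cases hbool : a.2.1 = b.2.1
    · exact Prod.ext h1 (Prod.ext hbool h2)
    · exfalso
      have hr : MutEx N C a b := ⟨h1, by revert hbool; cases a.2.1 <;> cases b.2.1 <;> simp⟩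
      have hr' : MutEx N C b a := ⟨h1.symm, by revert hbool; cases a.2.1 <;> cases b.2.1 <;> simp⟩
      exact lt_asymm (hlt a ha b hb hr) (hlt b hb a ha hr')
  calc S.card ≤ (Finset.univ : Finset (Fin N × Fin C)).card := by
        apply Finset.card_le_card_of_injOn (fun a => (a.1, a.2.2))
        · intro a _; exact Finset.mem_univ _
        · intro a ha b hb hab
          simp only [Prod.mk.injEq] at hab
          exact key a ha b hb hab.1 hab.2
    _ = N * C := by simp
end

section
/- Fix N C : ℕ and let A := Fin N × Bool × Fin C with the mutual-exclusion relation MutEx. If S : Finset A admits a consistent schedule for MutEx and S.card = N * C, then for every variable v : Fin N there exists b : Bool such that (v, b, i) ∈ S for every i : Fin C and (v, !b, i) ∉ S for every i : Fin C. -/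
/-- If `S` admits a consistent schedule for `MutEx` and `S.card = N * C`, then for
every variable `v` there is a boolean `b` such that `(v, b, i) ∈ S` for all `i` and
`(v, !b, i) ∉ S` for all `i`. -/
theorem mutEx_schedule_determines_valuation (N C : ℕ) (S : Finset (Fin N × Bool × Fin C))
    (h : ∃ f : Fin N × Bool × Fin C → ℕ, ConsistentSchedule (MutEx N C) S f)
    (hcard : S.card = N * C) :
    ∀ v : Fin N, ∃ b : Bool,
      (∀ i : Fin C, (v, b, i) ∈ S) ∧ (∀ i : Fin C, (v, !b, i) ∉ S) := by
  obtain ⟨f, hinj, hlt⟩ := h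
  -- No two elements with the same variable and opposite booleans are both in S.
  have hone : ∀ (v : Fin N) (b : Bool) (i j : Fin C),
      (v, b, i) ∈ S → (v, !b, j) ∈ S → False := by
    intro v b i j h1 h2
    have r1 : MutEx N C (v, b, i) (v, !b, j) := ⟨rfl, by simp⟩
    have r2 : MutEx N C (v, !b, j) (v, b, i) := ⟨rfl, by simp⟩
    have := hlt _ h1 _ h2 r1
    have := hlt _ h2 _ h1 r2
    omega
  -- fibers
  set fib : Fin N → Finset (Fin N × Bool × Fin C) :=
    fun v => S.filter (fun a => a.1 = v) with hfib
  have hfibinj : ∀ v : Fin N, Set.InjOn (fun a : Fin N × Bool × Fin C => a.2.2) ↑(fib v) := by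
    intro v x hx y hy hxy
    simp only [hfib, Finset.coe_filter, Set.mem_setOf_eq, Finset.mem_coe] at hx hy
    obtain ⟨hxS, hx1⟩ := hx
    obtain ⟨hyS, hy1⟩ := hy
    obtain ⟨xv, xb, xi⟩ := x
    obtain ⟨yv, yb, yi⟩ := y
    simp only at hxy hx1 hy1
    subst hx1; subst hy1; subst hxy
    by_cases hb : xb = yb
    · simp [hb]
    · exfalso
      have : yb = !xb := by cases xb <;> cases yb <;> simp_all
      subst this
      exact hone yv xb xi xi hxS hyS
  have hfible : ∀ v, (fib v).card ≤ C := by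
    intro v
    have := Finset.card_le_card_of_injOn
      (fun a : Fin N × Bool × Fin C => a.2.2)
      (fun a _ => Finset.mem_univ a.2.2) (hfibinj v)
    simpa using this
  have hsum : ∑ v : Fin N, (fib v).card = N * C := by
    rw [← hcard]
    exact (Finset.card_eq_sum_card_fiberwise (fun a _ => Finset.mem_univ a.1)).symm
  have hfibcard : ∀ v, (fib v).card = C := by
    by_contra hc
    push_neg at hc
    obtain ⟨v, hv⟩ := hc
    have hvlt : (fib v).card < C := lt_of_le_of_ne (hfible v) hv
    have : ∑ v : Fin N, (fib v).card < ∑ _v : Fin N, C := by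
      apply Finset.sum_lt_sum (fun w _ => hfible w) ⟨v, Finset.mem_univ v, hvlt⟩
    simp [hsum] at this
  intro v
  by_cases hC : C = 0
  · exact ⟨true, fun i => absurd i.2 (by omega), fun i => absurd i.2 (by omega)⟩
  -- fib v is nonempty
  have hne : (fib v).Nonempty := by
    rw [← Finset.card_pos, hfibcard]; omega
  obtain ⟨⟨w, b0, i0⟩, hx0⟩ := hne
  have hw : w = v ∧ (w, b0, i0) ∈ S := by
    simpa [hfib, Finset.mem_filter, and_comm] using hx0
  have hx0S : (v, b0, i0) ∈ S := hw.1 ▸ hw.2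
  refine ⟨b0, ?_, ?_⟩
  · -- surjectivity of a.2.2 on fib v
    intro i
    have himg : ((fib v).image (fun a => a.2.2)) = Finset.univ := by
      apply Finset.eq_univ_of_card
      rw [Finset.card_image_of_injOn (hfibinj v), hfibcard]
      simp
    have : i ∈ (fib v).image (fun a => a.2.2) := by rw [himg]; exact Finset.mem_univ i
    obtain ⟨⟨wv, wb, wi⟩, hmem, heq⟩ := Finset.mem_image.mp this
    simp only [hfib, Finset.mem_filter] at hmem
    obtain ⟨hmemS, hv1⟩ := hmem
    simp only at heq hv1
    subst heq
    rw [hv1] at hmemS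
    have hb : wb = b0 := by
      by_contra hb
      have : b0 = !wb := by cases wb <;> cases b0 <;> simp_all
      subst this
      exact hone v wb wi i0 hmemS hx0S
    rw [hb] at hmemS
    exact hmemS
  · intro i hi
    exact hone v b0 i0 i hx0S hi
end

section
/- Fix N C : ℕ with 1 ≤ C and let A := Fin N × Bool × Fin C with the mutual-exclusion relation MutEx. The map η ↦ σ(η) is injective, and a set S : Finset A admits a consistent schedule for MutEx with S.card = N * C if and only if there exists a valuation η : Fin N → Bool with S = σ(η); hence σ is a one-to-one correspondence between valuations over N boolean variables and the sets of N * C accepted actions consistent with the mutual-exclusion constraints. -/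
lemma sigmaSet_card (N C : ℕ) (η : Fin N → Bool) :
    (sigmaSet N C η).card = N * C := by
  have : (sigmaSet N C η).card = (Finset.univ : Finset (Fin N × Fin C)).card := by
    apply Finset.card_bij' (fun a _ => (a.1, a.2.2)) (fun p _ => (p.1, η p.1, p.2))
    case hi => intro a ha; exact Finset.mem_univ _
    case hj => intro p _; simp [sigmaSet]
    case left_inv =>
      rintro ⟨v, b, i⟩ ha
      simp [sigmaSet] at ha
      simp [ha]
    case right_inv => intro p _; rfl
  rw [this, Finset.card_univ, Fintype.card_prod, Fintype.card_fin, Fintype.card_fin]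

/-- `σ` is a one-to-one correspondence between valuations over `N` boolean variables
and the sets of `N * C` accepted actions consistent with the mutual-exclusion
constraints. -/
theorem sigmaSet_bijection (N C : ℕ) (hC : 1 ≤ C) :
    Function.Injective (sigmaSet N C) ∧
      ∀ S : Finset (Fin N × Bool × Fin C),
        ((∃ f : Fin N × Bool × Fin C → ℕ, ConsistentSchedule (MutEx N C) S f) ∧
            S.card = N * C) ↔
          ∃ η : Fin N → Bool, S = sigmaSet N C η := by
  have hmem : ∀ (η : Fin N → Bool) (a : Fin N × Bool × Fin C),
      a ∈ sigmaSet N C η ↔ a.2.1 = η a.1 := by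
    intro η a; simp [sigmaSet]
  constructor
  · intro η1 η2 h
    funext v
    have : ((v, η1 v, (⟨0, hC⟩ : Fin C)) : Fin N × Bool × Fin C) ∈ sigmaSet N C η1 := by
      simp [hmem]
    rw [h, hmem] at this
    exact this
  · intro S
    constructor
    · rintro ⟨⟨f, hinj, hlt⟩, hcard⟩
      -- no two conflicting elements in S
      have hconf : ∀ a ∈ S, ∀ b ∈ S, a.1 = b.1 → a.2.1 = b.2.1 := by
        intro a ha b hb h1
        by_contra h2
        have hab : MutEx N C a b := ⟨h1, by
          cases hx : a.2.1 <;> cases hy : b.2.1 <;> simp_all⟩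
        have hba : MutEx N C b a := ⟨h1.symm, by
          cases hx : a.2.1 <;> cases hy : b.2.1 <;> simp_all⟩
        exact absurd (lt_trans (hlt a ha b hb hab) (hlt b hb a ha hba)) (lt_irrefl _)
      classical
      refine ⟨fun v => if ∃ i : Fin C, ((v, true, i) : Fin N × Bool × Fin C) ∈ S then true
        else false, ?_⟩
      set η : Fin N → Bool := fun v =>
        if ∃ i : Fin C, ((v, true, i) : Fin N × Bool × Fin C) ∈ S then true else false with hη
      have hsub : S ⊆ sigmaSet N C η := by
        rintro ⟨v, b, i⟩ ha
        rw [hmem]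
        show b = η v
        cases hb : b
        · simp only [hη]
          rw [if_neg]
          rintro ⟨j, hj⟩
          have := hconf _ ha _ hj rfl
          simp [hb] at this
        · simp only [hη]
          rw [if_pos ⟨i, hb ▸ ha⟩]
      exact Finset.eq_of_subset_of_card_le hsub (by rw [sigmaSet_card, hcard])
    · rintro ⟨η, rfl⟩
      refine ⟨⟨fun a => (Fintype.equivFin _) a, fun a _ b _ h => (Fintype.equivFin _).injective (Fin.val_injective h), ?_⟩,
        sigmaSet_card N C η⟩
      intro a ha b hb hr
      exfalso
      rw [hmem] at ha hb
      obtain ⟨h1, h2⟩ := hr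
      rw [ha, hb, h1] at h2
      simp at h2
end

section
/- Fix N C : ℕ and a list cs of C nonempty clauses over N variables, and let Prec be the precedence relation of the associated reconciliation instance on A := Fin N × Bool × Fin C. If a set S : Finset A with S.card = N * C admits a consistent schedule for Prec, then there exists a valuation η : Fin N → Bool with S = σ(η) that satisfies every clause of cs. -/
/-- A valuation `η` satisfies a clause (a list of literals `(v, s)`) iff it
satisfies some literal of the clause, i.e. `η v = s`. -/
def SatClause {N : ℕ} (η : Fin N → Bool) (c : List (Fin N × Bool)) : Prop :=
  ∃ l ∈ c, η l.1 = l.2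

/-- `bar(v, s)` with clause index `i` is the action `(v, !s, i)`. -/
def bar {N : ℕ} (C : ℕ) (i : Fin C) (l : Fin N × Bool) : Fin N × Bool × Fin C :=
  (l.1, !l.2, i)

/-- The cyclic precedence edges associated to a clause `L` with index `i`:
`bar(v₁,s₁) < bar(v₂,s₂) < … < bar(v_k,s_k) < bar(v₁,s₁)`. -/
def ClauseCycleEdge {N C : ℕ} (L : List (Fin N × Bool)) (i : Fin C)
    (x y : Fin N × Bool × Fin C) : Prop :=
  ∃ k : Fin L.length, x = bar C i (L.get k) ∧
    y = bar C i (L.get ⟨(k.val + 1) % L.length,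
      Nat.mod_lt _ (Nat.lt_of_le_of_lt (Nat.zero_le _) k.isLt)⟩)

/-- The precedence relation of the reconciliation instance associated to a list `cs`
of clauses: the union of the mutual-exclusion constraints and, for each clause index
`i : Fin C`, the cyclic precedence constraints of the `i`-th clause. -/
def Prec (N C : ℕ) (cs : List (List (Fin N × Bool))) (x y : Fin N × Bool × Fin C) : Prop :=
  MutEx N C x y ∨ ∃ i : Fin C, ClauseCycleEdge (cs.getD i.val []) i x y

/-- If a set of `N * C` actions admits a consistent schedule for the precedence
relation `Prec`, then it is `σ(η)` for a valuation `η` satisfying every clause. -/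
theorem satisfying_of_schedule (N C : ℕ) (cs : List (List (Fin N × Bool)))
    (hlen : cs.length = C) (hne : ∀ c ∈ cs, c ≠ [])
    (S : Finset (Fin N × Bool × Fin C)) (hcard : S.card = N * C)
    (h : ∃ f : Fin N × Bool × Fin C → ℕ, ConsistentSchedule (Prec N C cs) S f) :
    ∃ η : Fin N → Bool, S = sigmaSet N C η ∧ ∀ c ∈ cs, SatClause η c := by

  classical
  obtain ⟨f, hinj, hmono⟩ := h
  have mutex : ∀ v : Fin N, ∀ b, ∀ i j : Fin C,
      (v, b, i) ∈ S → (v, !b, j) ∈ S → False := by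
    intro v b i j h1 h2
    have p1 : Prec N C cs (v, b, i) (v, !b, j) := Or.inl ⟨rfl, by simp⟩
    have p2 : Prec N C cs (v, !b, j) (v, b, i) := Or.inl ⟨rfl, by simp⟩
    exact absurd (hmono _ h1 _ h2 p1) (not_lt.mpr (le_of_lt (hmono _ h2 _ h1 p2)))
  rcases Nat.eq_zero_or_pos C with hC | hC
  · subst hC
    have hcs : cs = [] := List.length_eq_zero_iff.mp hlen
    refine ⟨fun _ => true, ?_, ?_⟩
    · apply Finset.eq_empty_of_forall_notMem (fun a _ => a.2.2.elim0) |>.trans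
      exact (Finset.eq_empty_of_forall_notMem (fun a _ => a.2.2.elim0)).symm
    · intro c hc; rw [hcs] at hc; exact absurd hc List.not_mem_nil
  · set g : Fin N × Bool × Fin C → Fin N × Fin C := fun a => (a.1, a.2.2) with hg
    have ginj : Set.InjOn g ↑S := by
      rintro ⟨v, b, i⟩ ha ⟨v', b', i'⟩ ha' hgg
      simp only [hg, Prod.mk.injEq] at hgg
      obtain ⟨hv, hi⟩ := hgg
      subst hv; subst hi
      have hb : b = b' := by
        by_contra hb
        have hbb : b = !b' := by cases b <;> cases b' <;> simp_all
        exact mutex v b' i i ha' (hbb ▸ ha)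
      rw [hb]
    have himg : S.image g = Finset.univ := by
      apply Finset.eq_univ_of_card
      rw [Finset.card_image_of_injOn ginj, hcard]
      simp [Fintype.card_prod]
    have surj : ∀ v : Fin N, ∀ i : Fin C, ∃ b, (v, b, i) ∈ S := by
      intro v i
      have : (v, i) ∈ S.image g := himg ▸ Finset.mem_univ _
      obtain ⟨a, ha, hag⟩ := Finset.mem_image.mp this
      obtain ⟨v', b, i'⟩ := a
      simp only [hg, Prod.mk.injEq] at hag
      obtain ⟨hv, hi⟩ := hag
      exact ⟨b, by rw [← hv, ← hi]; exact ha⟩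
    set i0 : Fin C := ⟨0, hC⟩ with hi0
    set η : Fin N → Bool := fun v => decide ((v, true, i0) ∈ S) with hη
    have hmem0 : ∀ v, (v, η v, i0) ∈ S := by
      intro v
      by_cases hm : (v, true, i0) ∈ S
      · have : η v = true := by simp [hη, hm]
        rw [this]; exact hm
      · have : η v = false := by simp [hη, hm]
        rw [this]
        obtain ⟨b, hb⟩ := surj v i0
        cases b
        · exact hb
        · exact absurd hb hm
    have memb : ∀ v b (i : Fin C), (v, b, i) ∈ S ↔ b = η v := by
      intro v b i
      constructor
      · intro hm
        by_contra hb
        have hbb : η v = !b := by cases b <;> cases hv : η v <;> simp_all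
        exact mutex v b i i0 hm (hbb ▸ hmem0 v)
      · intro hb
        obtain ⟨b', hb'⟩ := surj v i
        have : b' = η v := by
          by_contra hb2
          have hbb : η v = !b' := by cases b' <;> cases hv : η v <;> simp_all
          exact mutex v b' i i0 hb' (hbb ▸ hmem0 v)
        rw [hb, ← this]; exact hb'
    refine ⟨η, ?_, ?_⟩
    · ext ⟨v, b, i⟩
      simp only [sigmaSet, Finset.mem_filter, Finset.mem_univ, true_and]
      exact memb v b i
    · intro c hc
      obtain ⟨n, hget⟩ := List.mem_iff_get.mp hc
      set i : Fin C := ⟨n.val, hlen ▸ n.isLt⟩ with hi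
      have hgetD : cs.getD i.val [] = c := by
        rw [← hget]
        simp [hi, List.getD_eq_getElem?_getD, List.getElem?_eq_getElem n.isLt]
      by_contra hsat
      have hlit : ∀ l ∈ c, η l.1 = !l.2 := by
        intro l hl
        have h1 : ¬ (η l.1 = l.2) := fun hh => hsat ⟨l, hl, hh⟩
        rcases Bool.eq_false_or_eq_true (η l.1) with hv | hv <;>
          rcases Bool.eq_false_or_eq_true l.2 with hb | hb <;>
          simp only [hv, hb, Bool.not_false, Bool.not_true] at h1 ⊢ <;>
          first | rfl | exact absurd trivial h1
      have hbarmem : ∀ k : Fin c.length, bar C i (c.get k) ∈ S := by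
        intro k
        have hl := hlit (c.get k) (List.get_mem c k)
        show ((c.get k).1, !(c.get k).2, i) ∈ S
        exact (memb _ _ _).mpr (by rw [hl])
      have hlenpos : 0 < c.length := by
        have := hne c hc
        exact List.length_pos_iff.mpr this
      have hedge : ∀ k : Fin c.length,
          f (bar C i (c.get k)) <
          f (bar C i (c.get ⟨(k.val + 1) % c.length, Nat.mod_lt _ hlenpos⟩)) := by
        intro k
        apply hmono _ (hbarmem k) _ (hbarmem _)
        refine Or.inr ⟨i, ?_⟩
        rw [hgetD]
        exact ⟨k, rfl, rfl⟩
      obtain ⟨k0, -, hk0⟩ := Finset.exists_max_image Finset.univ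
        (fun k : Fin c.length => f (bar C i (c.get k))) ⟨⟨0, hlenpos⟩, Finset.mem_univ _⟩
      exact absurd (hedge k0) (not_lt.mpr (hk0 _ (Finset.mem_univ _)))
end
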